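/- Let I be a nonempty finite index set, and for each i ∈ I let Dᵢ be the closed disk in ℝ² with center cᵢ and radius rᵢ ≥ 0. Suppose the disks pairwise intersect: for all i, j ∈ I, Dᵢ ∩ Dⱼ ≠ ∅ (equivalently dist(cᵢ,cⱼ) ≤ rᵢ + rⱼ). Then the enlarged disks obtained by scaling every radius by the factor 2/√3 while keeping the centers have a common point: ⋂_{i∈I} closedBall(cᵢ, (2/√3)·rᵢ) ≠ ∅. -/

import Mathlib

noncomputable section

/-- The Euclidean plane. -/
abbrev Pt : Type := EuclideanSpace ℝ (Fin 2)

open Finset Metric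
open scoped RealInnerProductSpace

private lemma sqrt3_le_two : Real.sqrt 3 ≤ 2 := by
  nlinarith [Real.sq_sqrt (show (0:ℝ) ≤ 3 by norm_num), Real.sqrt_nonneg 3]

private lemma one_le_factor : (1 : ℝ) ≤ 2 / Real.sqrt 3 := by
  rw [le_div_iff₀ (by positivity)]
  have := sqrt3_le_two
  linarith

/-- Pairwise triangle: if three nonneg `a k`, positive, unit vectors `e k` (at most 3 of them)
combine to zero with positive coefficients, two of them have inner product `≤ -1/2`. -/
private lemma exists_pair_inner_le {ι : Type*} [Fintype ι] [DecidableEq ι]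
    (hcard : Fintype.card ι ≤ 3) (hcard2 : 2 ≤ Fintype.card ι)
    (a : ι → ℝ) (ha : ∀ k, 0 < a k) (e : ι → Pt) (he : ∀ k, ‖e k‖ = 1)
    (hsum : ∑ k, a k • e k = 0) :
    ∃ k l, k ≠ l ∧ ⟪e k, e l⟫ ≤ -(1/2) := by
  by_contra hcon
  push_neg at hcon
  have hnι : Nonempty ι := Fintype.card_pos_iff.mp (by omega)
  have hzero : (0:ℝ) = ∑ k, ∑ l, a k * a l * ⟪e k, e l⟫ := by
    have : (0:ℝ) = ⟪∑ k, a k • e k, ∑ l, a l • e l⟫ := by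
      rw [hsum]; simp
    rw [this, sum_inner]
    refine Finset.sum_congr rfl fun k _ => ?_
    rw [inner_sum]
    refine Finset.sum_congr rfl fun l _ => ?_
    rw [real_inner_smul_left, real_inner_smul_right]; ring
  have hsplit : ∀ k : ι, ∑ l, a k * a l * ⟪e k, e l⟫
      = a k ^ 2 + ∑ l ∈ Finset.univ.erase k, a k * a l * ⟪e k, e l⟫ := by
    intro k
    rw [← Finset.sum_erase_add _ _ (Finset.mem_univ k), real_inner_self_eq_norm_sq, he k]
    ring
  have hne : ∀ k : ι, (Finset.univ.erase k).Nonempty := by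
    intro k
    rw [← Finset.card_pos, Finset.card_erase_of_mem (Finset.mem_univ k), Finset.card_univ]
    omega
  have hlt : ∀ k : ι, ∑ l ∈ Finset.univ.erase k, a k * a l * ⟪e k, e l⟫
      > ∑ l ∈ Finset.univ.erase k, (-(1/2) * (a k * a l)) := by
    intro k
    refine Finset.sum_lt_sum_of_nonempty (hne k) fun l hl => ?_
    have hkl : k ≠ l := fun h => (Finset.mem_erase.1 hl).1 h.symm
    have := hcon k l hkl
    nlinarith [ha k, ha l, mul_pos (ha k) (ha l)]
  have hstrict : (0:ℝ) > ∑ k, a k ^ 2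
      + ∑ k, ∑ l ∈ Finset.univ.erase k, (-(1/2) * (a k * a l)) := by
    have h1 : (0:ℝ) > ∑ k, (a k ^ 2 + ∑ l ∈ Finset.univ.erase k, (-(1/2) * (a k * a l))) := by
      rw [hzero]
      refine Finset.sum_lt_sum_of_nonempty ?_ fun k _ => ?_
      · exact Finset.univ_nonempty
      · rw [hsplit k]
        have := hlt k
        linarith
    rw [Finset.sum_add_distrib] at h1
    linarith
  -- now compare with Cauchy-Schwarz
  have hoff : ∑ k, ∑ l ∈ Finset.univ.erase k, (a k * a l)
      = (∑ k, a k) ^ 2 - ∑ k, a k ^ 2 := by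
    have : ∀ k : ι, ∑ l ∈ Finset.univ.erase k, (a k * a l)
        = a k * (∑ l, a l) - a k ^ 2 := by
      intro k
      rw [← Finset.mul_sum, ← Finset.sum_erase_add _ _ (Finset.mem_univ k)]
      ring
    rw [Finset.sum_congr rfl fun k _ => this k, Finset.sum_sub_distrib, ← Finset.sum_mul, sq]
  have hCS : (∑ k, a k) ^ 2 ≤ 3 * ∑ k, a k ^ 2 := by
    calc (∑ k, a k) ^ 2 ≤ ((#(Finset.univ : Finset ι)) : ℝ) * ∑ k, a k ^ 2 :=
          sq_sum_le_card_mul_sum_sq (s := (Finset.univ : Finset ι)) (f := a)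
      _ ≤ 3 * ∑ k, a k ^ 2 := by
          have h2 : (0:ℝ) ≤ ∑ k, a k ^ 2 :=
            Finset.sum_nonneg fun k _ => sq_nonneg _
          have h1 : ((#(Finset.univ : Finset ι)) : ℝ) ≤ 3 := by
            rw [Finset.card_univ]; exact_mod_cast hcard
          exact mul_le_mul_of_nonneg_right h1 h2
  have : ∑ k, ∑ l ∈ Finset.univ.erase k, (-(1/2) * (a k * a l))
      = -(1/2) * ((∑ k, a k) ^ 2 - ∑ k, a k ^ 2) := by
    rw [← hoff]
    rw [Finset.mul_sum]
    refine Finset.sum_congr rfl fun k _ => ?_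
    rw [Finset.mul_sum]
  rw [this] at hstrict
  nlinarith


set_option maxHeartbeats 1000000 in
private lemma key {I : Type*} [Fintype I] [Nonempty I]
    (c : I → Pt) (r : I → ℝ) (hr : ∀ i, 0 < r i)
    (hpair : ∀ i j : I, dist (c i) (c j) ≤ r i + r j) :
    (⋂ i : I, Metric.closedBall (c i) ((2 / Real.sqrt 3) * r i)).Nonempty := by
  classical
  set f : Pt → ℝ := fun p => Finset.univ.sup' Finset.univ_nonempty
    (fun i => dist p (c i) / r i) with hf
  have hf_cont : Continuous f :=
    Continuous.finset_sup'_apply Finset.univ_nonempty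
      (fun i _ => (continuous_id.dist continuous_const).div_const _)
  have hf_le : ∀ p i, dist p (c i) / r i ≤ f p := by
    intro p i
    show dist p (c i) / r i ≤ Finset.univ.sup' Finset.univ_nonempty
      (fun i => dist p (c i) / r i)
    exact Finset.le_sup' (fun i => dist p (c i) / r i) (Finset.mem_univ i)
  have hf_nonneg : ∀ p, 0 ≤ f p := by
    intro p
    refine le_trans ?_ (hf_le p (Classical.arbitrary I))
    exact div_nonneg dist_nonneg (hr _).le
  obtain ⟨i₀⟩ := ‹Nonempty I›
  set R : ℝ := f (c i₀) * r i₀ + 1 with hR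
  have hRpos : 0 ≤ R := by
    have h1 := hf_nonneg (c i₀)
    have h2 := (hr i₀).le
    nlinarith
  have hc₀K : c i₀ ∈ Metric.closedBall (c i₀) R := by
    simpa [Metric.mem_closedBall] using hRpos
  obtain ⟨p, hpK, hmin⟩ := (isCompact_closedBall (c i₀) R).exists_isMinOn
    ⟨c i₀, hc₀K⟩ hf_cont.continuousOn
  have hglob : ∀ q, f p ≤ f q := by
    intro q
    by_cases hq : q ∈ Metric.closedBall (c i₀) R
    · exact hmin hq
    · have h1 : R < dist q (c i₀) := by
        rw [Metric.mem_closedBall, not_le] at hq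
        exact hq
      have h2 : f (c i₀) ≤ dist q (c i₀) / r i₀ := by
        rw [le_div_iff₀ (hr i₀)]
        nlinarith [hr i₀]
      exact le_trans (hmin hc₀K) (le_trans h2 (hf_le q i₀))
  set lam := f p with hlam
  have hdist : ∀ i, dist p (c i) ≤ lam * r i := fun i => by
    have h := hf_le p i
    rw [div_le_iff₀ (hr i)] at h
    linarith
  suffices hle : lam ≤ 2 / Real.sqrt 3 by
    refine ⟨p, Set.mem_iInter.2 fun i => ?_⟩
    rw [Metric.mem_closedBall]
    calc dist p (c i) ≤ lam * r i := hdist i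
      _ ≤ (2 / Real.sqrt 3) * r i := mul_le_mul_of_nonneg_right hle (hr i).le
  by_contra hcon
  push_neg at hcon
  have hlampos : 0 < lam := lt_trans (by positivity) hcon
  have hlamsq : 4 / 3 < lam ^ 2 := by
    have h4 : (2 / Real.sqrt 3) ^ 2 = 4 / 3 := by
      rw [div_pow, Real.sq_sqrt (by norm_num : (0:ℝ) ≤ 3)]; norm_num
    have h5 := pow_lt_pow_left₀ hcon (by positivity : (0:ℝ) ≤ 2 / Real.sqrt 3) two_ne_zero
    rw [h4] at h5
    exact h5
  -- the active index set
  set T : Finset I := Finset.univ.filter (fun i => dist p (c i) = lam * r i) with hT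
  have hTne : T.Nonempty := by
    obtain ⟨i, -, hi⟩ :=
      Finset.exists_mem_eq_sup' (Finset.univ_nonempty (α := I))
        (fun i => dist p (c i) / r i)
    refine ⟨i, Finset.mem_filter.2 ⟨Finset.mem_univ i, ?_⟩⟩
    have : lam = dist p (c i) / r i := hi
    rw [eq_div_iff (ne_of_gt (hr i))] at this
    linarith
  -- p lies in the convex hull of the active centers
  have hpc : p ∈ convexHull ℝ (c '' (T : Set I)) := by
    by_contra hsep
    have hfin : (c '' (T : Set I)).Finite := T.finite_toSet.image c
    obtain ⟨φ, u, hu1, hu2⟩ := geometric_hahn_banach_point_closed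
      (convex_convexHull ℝ _) (hfin.isCompact_convexHull ℝ).isClosed hsep
    set v : Pt := (InnerProductSpace.toDual ℝ Pt).symm φ with hv
    have hv_app : ∀ x : Pt, ⟪v, x⟫ = φ x := fun x => InnerProductSpace.toDual_symm_apply
    set δ : ℝ := u - φ p with hδ
    have hδpos : 0 < δ := sub_pos.2 hu1
    have hkey : ∀ i ∈ T, δ ≤ ⟪v, c i - p⟫ := by
      intro i hi
      have h1 : u < φ (c i) :=
        hu2 _ (subset_convexHull ℝ _ ⟨i, hi, rfl⟩)
      rw [inner_sub_right, hv_app, hv_app]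
      linarith
    have hvne : v ≠ 0 := by
      obtain ⟨i, hi⟩ := hTne
      intro h0
      have h1 := hkey i hi
      rw [h0] at h1
      simp only [inner_zero_left] at h1
      linarith
    have hnv : 0 < ‖v‖ := norm_pos_iff.2 hvne
    set g : I → ℝ := fun i =>
      if i ∈ T then δ / ‖v‖ ^ 2 else (lam * r i - dist p (c i)) / (2 * ‖v‖) with hg
    have hgpos : ∀ i, 0 < g i := by
      intro i
      by_cases hi : i ∈ T
      · simp only [hg, hi, if_true]
        positivity
      · have hgap : dist p (c i) < lam * r i := by
          refine lt_of_le_of_ne (hdist i) fun h => hi ?_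
          exact Finset.mem_filter.2 ⟨Finset.mem_univ i, h⟩
        simp only [hg, hi, if_false]
        have : 0 < lam * r i - dist p (c i) := by linarith
        positivity
    set t : ℝ := Finset.univ.inf' Finset.univ_nonempty g with ht
    have htpos : 0 < t := by
      rw [ht, Finset.lt_inf'_iff]
      exact fun i _ => hgpos i
    have htle : ∀ i, t ≤ g i := fun i => Finset.inf'_le _ (Finset.mem_univ i)
    set q : Pt := p + t • v with hq
    have hqlt : ∀ i, dist q (c i) < lam * r i := by
      intro i
      by_cases hi : i ∈ T
      · have hdisti : dist p (c i) = lam * r i := (Finset.mem_filter.1 hi).2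
        have hexp : dist q (c i) ^ 2
            = dist p (c i) ^ 2 - 2 * (t * ⟪v, c i - p⟫) + t ^ 2 * ‖v‖ ^ 2 := by
          rw [dist_eq_norm, dist_eq_norm, hq, add_sub_right_comm, norm_add_sq_real,
            real_inner_smul_right, norm_smul, Real.norm_eq_abs, abs_of_pos htpos,
            real_inner_comm, show p - c i = -(c i - p) by abel, inner_neg_right]
          ring
        have ht1 : t ≤ δ / ‖v‖ ^ 2 := by
          have h := htle i
          simpa only [hg, hi, if_true] using h
        have ht2 : t * ‖v‖ ^ 2 ≤ δ :=
          (le_div_iff₀ (by positivity : (0:ℝ) < ‖v‖ ^ 2)).1 ht1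
        have hδi := hkey i hi
        have hsq : dist q (c i) ^ 2 < (lam * r i) ^ 2 := by
          rw [hexp, hdisti]
          nlinarith [mul_le_mul_of_nonneg_left hδi htpos.le,
            mul_le_mul_of_nonneg_left ht2 htpos.le, mul_pos htpos hδpos]
        exact lt_of_pow_lt_pow_left₀ 2 (mul_pos hlampos (hr i)).le hsq
      · have hgap : dist p (c i) < lam * r i := by
          refine lt_of_le_of_ne (hdist i) fun h => hi ?_
          exact Finset.mem_filter.2 ⟨Finset.mem_univ i, h⟩
        have ht1 : t ≤ (lam * r i - dist p (c i)) / (2 * ‖v‖) := by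
          have h := htle i
          simpa only [hg, hi, if_false] using h
        have hqp : dist q p = t * ‖v‖ := by
          rw [dist_eq_norm, hq]
          simp [norm_smul, abs_of_pos htpos]
        have h5 : t * (2 * ‖v‖) ≤ lam * r i - dist p (c i) :=
          (le_div_iff₀ (by positivity : (0:ℝ) < 2 * ‖v‖)).1 ht1
        calc dist q (c i) ≤ dist q p + dist p (c i) := dist_triangle _ _ _
          _ < lam * r i := by rw [hqp]; nlinarith [mul_pos htpos hnv]
    have hfq : f q < lam := by
      have : Finset.univ.sup' Finset.univ_nonempty (fun i => dist q (c i) / r i) < lam := by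
        rw [Finset.sup'_lt_iff]
        intro i _
        rw [div_lt_iff₀ (hr i)]
        have := hqlt i
        linarith
      exact this
    exact absurd (hglob q) (not_le.2 hfq)
  -- Caratheodory: p is a positive convex combination of ≤ 3 active centers
  obtain ⟨ι, hι, z, w, hz_range, hz_ai, hw_pos, hw_sum, hw_eq⟩ :=
    eq_pos_convex_span_of_mem_convexHull hpc
  letI := hι
  letI : DecidableEq ι := Classical.decEq ι
  have hz : ∀ k, ∃ i, i ∈ T ∧ z k = c i := by
    intro k
    obtain ⟨i, hi, hzi⟩ := hz_range ⟨k, rfl⟩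
    exact ⟨i, hi, hzi.symm⟩
  have hz_norm : ∀ k, 0 < ‖z k - p‖ := by
    intro k
    obtain ⟨i, hiT, hzi⟩ := hz k
    have h1 : dist p (c i) = lam * r i := (Finset.mem_filter.1 hiT).2
    have h2 : 0 < lam * r i := mul_pos hlampos (hr i)
    rw [hzi, ← dist_eq_norm, dist_comm, h1]
    exact h2
  have hsum0 : ∑ k, w k • (z k - p) = 0 := by
    simp only [smul_sub]
    rw [Finset.sum_sub_distrib, hw_eq, ← Finset.sum_smul, hw_sum, one_smul, sub_self]
  haveI hnι : Nonempty ι := by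
    by_contra h
    rw [not_nonempty_iff] at h
    rw [Finset.univ_eq_empty, Finset.sum_empty] at hw_sum
    norm_num at hw_sum
  have hcard2 : 2 ≤ Fintype.card ι := by
    by_contra h
    push_neg at h
    have h1 : Fintype.card ι = 1 := by
      have := Fintype.card_pos (α := ι)
      omega
    obtain ⟨k, hk⟩ := Finset.card_eq_one.mp (show (Finset.univ : Finset ι).card = 1 by rw [Finset.card_univ]; exact h1)
    rw [hk, Finset.sum_singleton] at hsum0
    rcases smul_eq_zero.mp hsum0 with h2 | h2
    · exact absurd h2 (ne_of_gt (hw_pos k))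
    · have := hz_norm k
      rw [h2, norm_zero] at this
      exact lt_irrefl 0 this
  have hcard3 : Fintype.card ι ≤ 3 := by
    calc Fintype.card ι
        ≤ Module.finrank ℝ (vectorSpan ℝ (Set.range z)) + 1 := hz_ai.card_le_finrank_succ
      _ ≤ Module.finrank ℝ Pt + 1 := by
          have := Submodule.finrank_le (vectorSpan ℝ (Set.range z))
          omega
      _ = 3 := by rw [finrank_euclideanSpace_fin]
  -- apply the angle lemma
  obtain ⟨k, l, hkl, hinner⟩ := exists_pair_inner_le hcard3 hcard2
    (fun k => w k * ‖z k - p‖) (fun k => mul_pos (hw_pos k) (hz_norm k))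
    (fun k => ‖z k - p‖⁻¹ • (z k - p))
    (fun k => by
      have hk := hz_norm k
      have hne : z k - p ≠ 0 := by
        intro h
        rw [h, norm_zero] at hk
        exact lt_irrefl 0 hk
      exact norm_smul_inv_norm hne)
    (by
      rw [← hsum0]
      refine Finset.sum_congr rfl fun k _ => ?_
      rw [smul_smul, mul_assoc, mul_inv_cancel₀ (ne_of_gt (hz_norm k)), mul_one])
  have hinner' : ⟪z k - p, z l - p⟫ ≤ -(1/2) * (‖z k - p‖ * ‖z l - p‖) := by
    rw [real_inner_smul_left, real_inner_smul_right] at hinner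
    have hk2 := hz_norm k
    have hl2 := hz_norm l
    have hmul := mul_le_mul_of_nonneg_left hinner (le_of_lt (mul_pos hk2 hl2))
    have hLHS : (‖z k - p‖ * ‖z l - p‖)
        * (‖z k - p‖⁻¹ * (‖z l - p‖⁻¹ * ⟪z k - p, z l - p⟫))
        = ⟪z k - p, z l - p⟫ := by
      rw [show (‖z k - p‖ * ‖z l - p‖)
          * (‖z k - p‖⁻¹ * (‖z l - p‖⁻¹ * ⟪z k - p, z l - p⟫))
          = (‖z k - p‖ * ‖z k - p‖⁻¹) * ((‖z l - p‖ * ‖z l - p‖⁻¹)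
            * ⟪z k - p, z l - p⟫) from by ring,
        mul_inv_cancel₀ hk2.ne', mul_inv_cancel₀ hl2.ne', one_mul, one_mul]
    rw [hLHS] at hmul
    linarith [hmul]
  obtain ⟨i, hiT, hzi⟩ := hz k
  obtain ⟨j, hjT, hzj⟩ := hz l
  have hni : ‖z k - p‖ = lam * r i := by
    rw [hzi, ← dist_eq_norm, dist_comm]
    exact (Finset.mem_filter.1 hiT).2
  have hnj : ‖z l - p‖ = lam * r j := by
    rw [hzj, ← dist_eq_norm, dist_comm]
    exact (Finset.mem_filter.1 hjT).2
  have hsqd : dist (c i) (c j) ^ 2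
      = (lam * r i) ^ 2 - 2 * ⟪z k - p, z l - p⟫ + (lam * r j) ^ 2 := by
    have hdiff : c i - c j = (z k - p) - (z l - p) := by
      rw [hzi, hzj]; abel
    rw [dist_eq_norm, hdiff, norm_sub_sq_real, hni, hnj]
  have h2 : dist (c i) (c j) ^ 2 ≤ (r i + r j) ^ 2 :=
    pow_le_pow_left₀ dist_nonneg (hpair i j) 2
  rw [hni, hnj] at hinner'
  have hA : 0 < r i ^ 2 + r i * r j + r j ^ 2 := by
    nlinarith [mul_pos (hr i) (hr j), sq_nonneg (r i), sq_nonneg (r j)]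
  have h3 : (4/3) * (r i ^ 2 + r i * r j + r j ^ 2)
      < lam ^ 2 * (r i ^ 2 + r i * r j + r j ^ 2) :=
    mul_lt_mul_of_pos_right hlamsq hA
  nlinarith [hsqd, h2, h3, sq_nonneg (r i - r j), hinner']

theorem enlarged_disks_common_point {I : Type*} [Fintype I] [Nonempty I]
    (c : I → Pt) (r : I → ℝ) (hr : ∀ i, 0 ≤ r i)
    (hpair : ∀ i j : I,
      (Metric.closedBall (c i) (r i) ∩ Metric.closedBall (c j) (r j)).Nonempty) :
    (⋂ i : I, Metric.closedBall (c i) ((2 / Real.sqrt 3) * r i)).Nonempty := by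
  classical
  have hdistpair : ∀ i j, dist (c i) (c j) ≤ r i + r j := by
    intro i j
    obtain ⟨z, hz1, hz2⟩ := hpair i j
    rw [Metric.mem_closedBall] at hz1 hz2
    calc dist (c i) (c j) ≤ dist (c i) z + dist z (c j) := dist_triangle _ _ _
      _ ≤ r i + r j := by
          rw [dist_comm (c i) z]
          exact add_le_add hz1 hz2
  by_cases hzero : ∃ i, r i = 0
  · obtain ⟨i, hi⟩ := hzero
    refine ⟨c i, Set.mem_iInter.2 fun j => ?_⟩
    rw [Metric.mem_closedBall]
    have h1 : dist (c i) (c j) ≤ r j := by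
      have := hdistpair i j
      rw [hi] at this
      linarith
    calc dist (c i) (c j) ≤ r j := h1
      _ = 1 * r j := (one_mul _).symm
      _ ≤ (2 / Real.sqrt 3) * r j := mul_le_mul_of_nonneg_right one_le_factor (hr j)
  · push_neg at hzero
    exact key c r (fun i => lt_of_le_of_ne (hr i) (Ne.symm (hzero i))) hdistpair
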